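/- The Gibbs measure μ(σ) = e^{-βH(σ)}/Z, with Z = Σ_{η∈S} e^{-βH(η)}, is stationary for the nearest-neighbor PCA: Σ_{σ∈S} μ(σ) p(σ,η) = μ(η) for every η ∈ S. -/

import Mathlib

open scoped BigOperators Classical
open Filter Topology

noncomputable section

/-! ### The nearest-neighbour reversible PCA -/

/-- Spin value (`±1`) of a Boolean spin variable. -/
def spinVal (b : Bool) : ℝ := if b then 1 else -1

/-- The two-dimensional torus `Λ = (ℤ/Lℤ)²`. -/
abbrev Torus (L : ℕ) := ZMod L × ZMod L

/-- Configuration space `S = {-1,+1}^Λ`, encoded with Booleans. -/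
abbrev Cfg (L : ℕ) := Torus L → Bool

/-- Nearest-neighbour kernel: `K(x-y) = 1` iff `|x-y| = 1` on the torus. -/
def nnK (L : ℕ) [NeZero L] (x y : Torus L) : ℝ :=
  if y = (x.1 + 1, x.2) ∨ y = (x.1 - 1, x.2) ∨ y = (x.1, x.2 + 1) ∨ y = (x.1, x.2 - 1)
  then 1 else 0

/-- Local field `S_σ(x) = Σ_y K(x-y) σ(y)`. -/
def locField (L : ℕ) [NeZero L] (σ : Cfg L) (x : Torus L) : ℝ :=
  ∑ y : Torus L, nnK L x y * spinVal (σ y)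

/-- Single-site updating probability `p_{x,σ}(s) = 1/(1+exp(-2βs(S_σ(x)+h)))`. -/
def flipProb (L : ℕ) [NeZero L] (β h : ℝ) (σ : Cfg L) (x : Torus L) (s : ℝ) : ℝ :=
  1 / (1 + Real.exp (-2 * β * s * (locField L σ x + h)))

/-- PCA transition matrix `p(σ,η) = Π_x p_{x,σ}(η(x))`. -/
def pca (L : ℕ) [NeZero L] (β h : ℝ) (σ η : Cfg L) : ℝ :=
  ∏ x : Torus L, flipProb L β h σ x (spinVal (η x))

/-- The Hamiltonian `H(σ) = -h Σ_x σ(x) - (1/β) Σ_x log cosh (β (S_σ(x)+h))`. -/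
def hamPCA (L : ℕ) [NeZero L] (β h : ℝ) (σ : Cfg L) : ℝ :=
  -h * ∑ x : Torus L, spinVal (σ x)
    - (1 / β) * ∑ x : Torus L, Real.log (Real.cosh (β * (locField L σ x + h)))

/-- The (zero-temperature) energy `E(σ) = -h Σ_x σ(x) - Σ_x |S_σ(x)+h|`. -/
def energyPCA (L : ℕ) [NeZero L] (h : ℝ) (σ : Cfg L) : ℝ :=
  -h * ∑ x : Torus L, spinVal (σ x) - ∑ x : Torus L, |locField L σ x + h|

/-- The all-minus configuration `d`. -/
def dCfg (L : ℕ) : Cfg L := fun _ => false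

/-- The all-plus configuration `u`. -/
def uCfg (L : ℕ) : Cfg L := fun _ => true

/-- The even checkerboard `c^e(x) = (-1)^{x₁+x₂}`. -/
def ceCfg (L : ℕ) : Cfg L := fun x => decide (Even (x.1.val + x.2.val))

/-- The odd checkerboard `c^o = -c^e`. -/
def coCfg (L : ℕ) : Cfg L := fun x => !(ceCfg L x)

/-- The critical length `λ = ⌊2/h⌋ + 1`. -/
def critLen (h : ℝ) : ℕ := ⌊2 / h⌋₊ + 1

/-- The activation energy `Γ_m = -2hλ² + 2(4+h)λ - 2h`. -/
def Gammam (h : ℝ) : ℝ :=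
  -2 * h * (critLen h : ℝ) ^ 2 + 2 * (4 + h) * (critLen h : ℝ) - 2 * h

/-- The Gibbs measure `μ(σ) = e^{-βH(σ)}/Z`. -/
def gibbsPCA (L : ℕ) [NeZero L] (β h : ℝ) (σ : Cfg L) : ℝ :=
  Real.exp (-(β * hamPCA L β h σ)) / ∑ η : Cfg L, Real.exp (-(β * hamPCA L β h η))

/-! ### Generic finite-state Markov chain notions -/

variable {X : Type*} [Fintype X]

/-- `hitIn p A B n x` is the probability that the chain with transition matrix `p`
started at `x` makes its first visit to `A ∪ B` at time `n` and lands in `A`,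
i.e. `P_x(τ_{A∪B} = n, X_n ∈ A)`. -/
def hitIn (p : X → X → ℝ) (A B : Set X) : ℕ → X → ℝ
  | 0, _ => 0
  | n + 1, x =>
      ∑ y : X, p x y *
        (if y ∈ A then (if n = 0 then (1 : ℝ) else 0)
          else if y ∈ B then 0 else hitIn p A B n y)

/-- `P_x(τ_A < τ_B)`: the chain hits `A` strictly before `B`. -/
def probHitBefore (p : X → X → ℝ) (A B : Set X) (x : X) : ℝ :=
  ∑' n : ℕ, hitIn p A B n x

/-- The mean hitting time `E_x[τ_A]`. -/
def expHit (p : X → X → ℝ) (A : Set X) (x : X) : ℝ :=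
  ∑' n : ℕ, (n : ℝ) * hitIn p A ∅ n x

/-- The restricted mean hitting time `E_x[τ_A 1_{τ_A < τ_B}]`. -/
def expHitBefore (p : X → X → ℝ) (A B : Set X) (x : X) : ℝ :=
  ∑' n : ℕ, (n : ℝ) * hitIn p A B n x

/-- The tail probability `P_x(τ_A > r)` for a real threshold `r`. -/
def tailProb (p : X → X → ℝ) (A : Set X) (x : X) (r : ℝ) : ℝ :=
  1 - ∑' n : ℕ, if (n : ℝ) ≤ r then hitIn p A ∅ n x else 0

/-- `p` is a stochastic (Markov transition) matrix. -/
def IsStochasticMat (p : X → X → ℝ) : Prop :=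
  (∀ x y, 0 ≤ p x y) ∧ ∀ x, ∑ y : X, p x y = 1

/-- `n`-step transition probabilities. -/
def stepProb (p : X → X → ℝ) : ℕ → X → X → ℝ
  | 0, x, y => if x = y then (1 : ℝ) else 0
  | n + 1, x, y => ∑ z : X, p x z * stepProb p n z y

/-- Irreducibility of the chain. -/
def IsIrreducibleMat (p : X → X → ℝ) : Prop :=
  ∀ x y, ∃ n, 0 < n ∧ 0 < stepProb p n x y

/-- Aperiodicity: for every state the set of return times has no common divisor `> 1`. -/
def IsAperiodicMat (p : X → X → ℝ) : Prop :=
  ∀ x : X, ∀ d : ℕ, (∀ n : ℕ, 0 < n → 0 < stepProb p n x x → d ∣ n) → d = 1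

/-- Reversibility (detailed balance) of `p` with respect to `μ`. -/
def IsReversibleWrt (μ : X → ℝ) (p : X → X → ℝ) : Prop :=
  ∀ x y, μ x * p x y = μ y * p y x

/-- The Dirichlet form `E(f) = (1/2) Σ_{x,y} μ(x) p(x,y) (f(x)-f(y))²`. -/
def dirichletForm (μ : X → ℝ) (p : X → X → ℝ) (f : X → ℝ) : ℝ :=
  (1 / 2) * ∑ x : X, ∑ y : X, μ x * p x y * (f x - f y) ^ 2

/-- The capacity `cap_β(A,B) = inf {E(f) : f : X → [0,1], f = 1 on A, f = 0 on B}`. -/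
def capacityOf (μ : X → ℝ) (p : X → X → ℝ) (A B : Set X) : ℝ :=
  sInf {e | ∃ f : X → ℝ,
    (∀ x, f x ∈ Set.Icc (0 : ℝ) 1) ∧ (∀ x ∈ A, f x = 1) ∧ (∀ x ∈ B, f x = 0) ∧
    e = dirichletForm μ p f}

/-- The equilibrium potential of the pair `(A,B)`: `f*(η) = P_η(τ_A < τ_B)`
for `η ∉ A ∪ B`, `f* = 1` on `A` and `f* = 0` on `B`. -/
def eqPotential (p : X → X → ℝ) (A B : Set X) : X → ℝ :=
  fun x => if x ∈ A then 1 else if x ∈ B then 0 else probHitBefore p A B x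

/-! ### Zero-temperature energy landscape of the PCA -/

/-- Energy cost `Δ(σ,η) = Σ_{x : η(x)(S_σ(x)+h) < 0} 2|S_σ(x)+h|`. -/
def deltaCost (L : ℕ) [NeZero L] (h : ℝ) (σ η : Cfg L) : ℝ :=
  ∑ x : Torus L,
    if spinVal (η x) * (locField L σ x + h) < 0 then 2 * |locField L σ x + h| else 0

/-- Zero-temperature communication height `E(σ,η) = E(σ) + Δ(σ,η)`. -/
def commEnergy (L : ℕ) [NeZero L] (h : ℝ) (σ η : Cfg L) : ℝ :=
  energyPCA L h σ + deltaCost L h σ η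

/-- Height `Φ_ω` along a path `ω` (zero-temperature sense). -/
def pathHeightE (L : ℕ) [NeZero L] (h : ℝ) : List (Cfg L) → ℝ
  | [] => 0
  | [σ] => energyPCA L h σ
  | σ :: η :: rest => max (commEnergy L h σ η) (pathHeightE L h (η :: rest))

/-- Minimax (communication height) `Φ(σ,A)` between `σ` and the set `A`. -/
def PhiE (L : ℕ) [NeZero L] (h : ℝ) (σ : Cfg L) (A : Set (Cfg L)) : ℝ :=
  sInf {c | ∃ ω : List (Cfg L),
    ω.head? = some σ ∧ (∃ η ∈ A, ω.getLast? = some η) ∧ c = pathHeightE L h ω}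

/-- Stability level `V_σ = Φ(σ, I_σ) - E(σ)` where `I_σ = {η : E(η) < E(σ)}`. -/
def stabLevel (L : ℕ) [NeZero L] (h : ℝ) (σ : Cfg L) : ℝ :=
  PhiE L h σ {η | energyPCA L h η < energyPCA L h σ} - energyPCA L h σ

/-- The set `X^s` of global minima of the energy. -/
def XsSet (L : ℕ) [NeZero L] (h : ℝ) : Set (Cfg L) :=
  {σ | ∀ η, energyPCA L h σ ≤ energyPCA L h η}

/-- The communication energy `Γ = max_{σ ∉ X^s} V_σ`. -/
def commGamma (L : ℕ) [NeZero L] (h : ℝ) : ℝ :=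
  sSup {v | ∃ σ : Cfg L, σ ∉ XsSet L h ∧ v = stabLevel L h σ}

/-- The set of metastable states `X^m = {η : V_η = Γ}`. -/
def XmSet (L : ℕ) [NeZero L] (h : ℝ) : Set (Cfg L) :=
  {σ | stabLevel L h σ = commGamma L h}

/-! ### Auxiliary lemmas for stationarity -/

lemma one_div_one_add_exp (t : ℝ) :
    1 / (1 + Real.exp (-2 * t)) = Real.exp t / (2 * Real.cosh t) := by
  rw [Real.cosh_eq]
  have h1 : (0:ℝ) < 1 + Real.exp (-2 * t) := by positivity
  have h2 : (0:ℝ) < Real.exp t + Real.exp (-t) := by positivity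
  rw [div_eq_div_iff h1.ne' (by positivity)]
  have : Real.exp t * Real.exp (-2 * t) = Real.exp (-t) := by
    rw [← Real.exp_add]; ring_nf
  nlinarith [this]

lemma spinVal_sq (b : Bool) : spinVal b * spinVal b = 1 := by
  cases b <;> simp [spinVal]

lemma flipProb_eq (L : ℕ) [NeZero L] (β h : ℝ) (σ : Cfg L) (x : Torus L) (b : Bool) :
    flipProb L β h σ x (spinVal b)
      = Real.exp (β * spinVal b * (locField L σ x + h))
          / (2 * Real.cosh (β * (locField L σ x + h))) := by
  unfold flipProb
  have := one_div_one_add_exp (β * spinVal b * (locField L σ x + h))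
  have hc : Real.cosh (β * spinVal b * (locField L σ x + h))
      = Real.cosh (β * (locField L σ x + h)) := by
    cases b <;> simp [spinVal]
  rw [show -2 * β * spinVal b * (locField L σ x + h)
      = -2 * (β * spinVal b * (locField L σ x + h)) by ring, this, hc]

lemma flipProb_sum (L : ℕ) [NeZero L] (β h : ℝ) (σ : Cfg L) (x : Torus L) :
    ∑ b : Bool, flipProb L β h σ x (spinVal b) = 1 := by
  have hc : (0:ℝ) < Real.cosh (β * (locField L σ x + h)) := Real.cosh_pos _
  have e1 : spinVal true = 1 := rfl
  have e2 : spinVal false = -1 := rfl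
  rw [Fintype.sum_bool, flipProb_eq, flipProb_eq, e1, e2, ← add_div,
    div_eq_one_iff_eq (by positivity), Real.cosh_eq,
    show β * 1 * (locField L σ x + h) = β * (locField L σ x + h) by ring,
    show β * -1 * (locField L σ x + h) = -(β * (locField L σ x + h)) by ring]
  ring

lemma pca_row_sum (L : ℕ) [NeZero L] (β h : ℝ) (σ : Cfg L) :
    ∑ η : Cfg L, pca L β h σ η = 1 := by
  unfold pca
  have key := Finset.prod_univ_sum (fun _ : Torus L => (Finset.univ : Finset Bool))
    (fun x b => flipProb L β h σ x (spinVal b))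
  rw [← Fintype.piFinset_univ, ← key, Finset.prod_eq_one]
  intro x _
  exact flipProb_sum L β h σ x

lemma nnK_symm (L : ℕ) [NeZero L] (x y : Torus L) : nnK L x y = nnK L y x := by
  unfold nnK
  obtain ⟨x1, x2⟩ := x
  obtain ⟨y1, y2⟩ := y
  congr 1
  simp only [Prod.mk.injEq, eq_iff_iff]
  constructor
  · rintro (⟨h1, h2⟩ | ⟨h1, h2⟩ | ⟨h1, h2⟩ | ⟨h1, h2⟩) <;> subst h1 <;> subst h2
    · exact Or.inr (Or.inl ⟨by ring, by ring⟩)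
    · exact Or.inl ⟨by ring, by ring⟩
    · exact Or.inr (Or.inr (Or.inr ⟨by ring, by ring⟩))
    · exact Or.inr (Or.inr (Or.inl ⟨by ring, by ring⟩))
  · rintro (⟨h1, h2⟩ | ⟨h1, h2⟩ | ⟨h1, h2⟩ | ⟨h1, h2⟩) <;> subst h1 <;> subst h2
    · exact Or.inr (Or.inl ⟨by ring, by ring⟩)
    · exact Or.inl ⟨by ring, by ring⟩
    · exact Or.inr (Or.inr (Or.inr ⟨by ring, by ring⟩))
    · exact Or.inr (Or.inr (Or.inl ⟨by ring, by ring⟩))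

lemma interaction_symm (L : ℕ) [NeZero L] (σ η : Cfg L) :
    ∑ x : Torus L, spinVal (η x) * locField L σ x
      = ∑ x : Torus L, spinVal (σ x) * locField L η x := by
  unfold locField
  simp only [Finset.mul_sum]
  rw [Finset.sum_comm]
  apply Finset.sum_congr rfl; intro x _
  apply Finset.sum_congr rfl; intro y _
  rw [nnK_symm]; ring

lemma weight_mul_pca (L : ℕ) [NeZero L] (β h : ℝ) (hβ : β ≠ 0) (σ η : Cfg L) :
    Real.exp (-(β * hamPCA L β h σ)) * pca L β h σ η
      = Real.exp (β * h * ∑ x : Torus L, spinVal (σ x)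
          + β * h * ∑ x : Torus L, spinVal (η x)
          + β * ∑ x : Torus L, spinVal (η x) * locField L σ x)
        / 2 ^ Fintype.card (Torus L) := by
  unfold hamPCA pca
  have hexp : Real.exp (-(β * (-h * ∑ x : Torus L, spinVal (σ x)
      - (1 / β) * ∑ x : Torus L, Real.log (Real.cosh (β * (locField L σ x + h))))))
      = Real.exp (β * h * ∑ x : Torus L, spinVal (σ x))
        * ∏ x : Torus L, Real.cosh (β * (locField L σ x + h)) := by
    rw [show -(β * (-h * ∑ x : Torus L, spinVal (σ x)
        - (1 / β) * ∑ x : Torus L, Real.log (Real.cosh (β * (locField L σ x + h)))))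
      = β * h * ∑ x : Torus L, spinVal (σ x)
        + ∑ x : Torus L, Real.log (Real.cosh (β * (locField L σ x + h))) by
        field_simp; ring]
    rw [Real.exp_add, Real.exp_sum]
    congr 1
    apply Finset.prod_congr rfl
    intro x _
    exact Real.exp_log (Real.cosh_pos _)
  have hprod : (∏ x : Torus L, flipProb L β h σ x (spinVal (η x)))
      = (∏ x : Torus L, Real.exp (β * spinVal (η x) * (locField L σ x + h)))
        / ∏ x : Torus L, (2 * Real.cosh (β * (locField L σ x + h))) := by
    rw [← Finset.prod_div_distrib]
    apply Finset.prod_congr rfl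
    intro x _
    exact flipProb_eq L β h σ x (η x)
  have hc : (0:ℝ) < ∏ x : Torus L, Real.cosh (β * (locField L σ x + h)) :=
    Finset.prod_pos fun x _ => Real.cosh_pos _
  have hS : (∑ x : Torus L, β * spinVal (η x) * (locField L σ x + h))
      = β * h * ∑ x : Torus L, spinVal (η x)
        + β * ∑ x : Torus L, spinVal (η x) * locField L σ x := by
    rw [Finset.mul_sum, Finset.mul_sum, ← Finset.sum_add_distrib]
    apply Finset.sum_congr rfl
    intro x _
    ring
  rw [hexp, hprod, Finset.prod_mul_distrib, Finset.prod_const, Finset.card_univ,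
    ← Real.exp_sum, hS]
  set A := β * h * ∑ x : Torus L, spinVal (σ x) with hA
  set B := β * h * ∑ x : Torus L, spinVal (η x) with hB
  set C := β * ∑ x : Torus L, spinVal (η x) * locField L σ x with hC
  set P := ∏ x : Torus L, Real.cosh (β * (locField L σ x + h)) with hP
  set N := Fintype.card (Torus L) with hN
  have hPne : P ≠ 0 := hc.ne'
  have h2 : ((2:ℝ) ^ N) ≠ 0 := by positivity
  rw [show A + B + C = A + (B + C) by ring, Real.exp_add]
  field_simp [Real.exp_add]
  ring
  rw [Real.exp_add, Real.exp_add]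

lemma weight_detailed_balance (L : ℕ) [NeZero L] (β h : ℝ) (hβ : β ≠ 0) (σ η : Cfg L) :
    Real.exp (-(β * hamPCA L β h σ)) * pca L β h σ η
      = Real.exp (-(β * hamPCA L β h η)) * pca L β h η σ := by
  rw [weight_mul_pca L β h hβ σ η, weight_mul_pca L β h hβ η σ, interaction_symm]
  ring_nf

/-- Stationarity of the Gibbs measure: `Σ_σ μ(σ) p(σ,η) = μ(η)`. -/
theorem gibbs_stationary (L : ℕ) [NeZero L] (hL : Even L) (β h : ℝ)
    (hβ : 0 < β) (hh0 : 0 < h) (hh1 : h < 1) :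
    ∀ η : Cfg L, ∑ σ : Cfg L, gibbsPCA L β h σ * pca L β h σ η = gibbsPCA L β h η := by
  intro η
  unfold gibbsPCA
  have hZ : (0:ℝ) < ∑ η : Cfg L, Real.exp (-(β * hamPCA L β h η)) :=
    Finset.sum_pos (fun _ _ => Real.exp_pos _) Finset.univ_nonempty
  calc ∑ σ : Cfg L, Real.exp (-(β * hamPCA L β h σ))
        / (∑ η : Cfg L, Real.exp (-(β * hamPCA L β h η))) * pca L β h σ η
      = (∑ σ : Cfg L, Real.exp (-(β * hamPCA L β h σ)) * pca L β h σ η)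
        / (∑ η : Cfg L, Real.exp (-(β * hamPCA L β h η))) := by
        rw [Finset.sum_div]
        apply Finset.sum_congr rfl; intro σ _; ring
    _ = (∑ σ : Cfg L, Real.exp (-(β * hamPCA L β h η)) * pca L β h η σ)
        / (∑ η : Cfg L, Real.exp (-(β * hamPCA L β h η))) := by
        congr 1
        exact Finset.sum_congr rfl fun σ _ => weight_detailed_balance L β h hβ.ne' σ η
    _ = Real.exp (-(β * hamPCA L β h η))
        / (∑ η : Cfg L, Real.exp (-(β * hamPCA L β h η))) := by
        rw [← Finset.mul_sum, pca_row_sum, mul_one]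

end
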